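/- Let Q = [0,∞)² carry its standard structure of a 2-dimensional smooth manifold with corners (the Euclidean quadrant), let R = C∞(Q,ℝ) be the commutative ring of smooth real-valued functions on Q, and let I ⊆ R be the ideal generated by the single function (x,y) ↦ x + y. Then the quotient ring R/I is infinite-dimensional as a real vector space; indeed, the images in R/I of the functions (x,y) ↦ xᵏ, for k ∈ ℕ, are linearly independent over ℝ. This holds even though the zero set of x + y in Q is the single point (0,0). -/

import Mathlib

open scoped Manifold
open Set Filter Topology

noncomputable section

/-- The ring `R = C∞(Q,ℝ)` of smooth real-valued functions on the Euclidean quadrant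
`Q = [0,∞)²`, with its standard structure of a 2-dimensional smooth manifold with corners. -/
abbrev QuadrantSmoothFunctions : Type :=
  C^(⊤ : ℕ∞)⟮modelWithCornersEuclideanQuadrant 2, EuclideanQuadrant 2; ℝ⟯

/-- The `i`-th coordinate function on the quadrant `[0,∞)²`, as a smooth function. -/
def quadrantCoord (i : Fin 2) : QuadrantSmoothFunctions :=
  ⟨fun q => q.val i,
    (((EuclideanSpace.proj (𝕜 := ℝ) i).contDiff).contMDiff).comp (modelWithCornersEuclideanQuadrant 2).contMDiff⟩

/-- The ideal of `C∞([0,∞)²,ℝ)` generated by the function `(x, y) ↦ x + y`. -/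
def quadrantIdeal : Ideal QuadrantSmoothFunctions :=
  Ideal.span {quadrantCoord 0 + quadrantCoord 1}


abbrev E2 := EuclideanSpace ℝ (Fin 2)
def S2 : Set E2 := {v | ∀ i, 0 ≤ v i}

lemma uniqueDiffOn_S2 : UniqueDiffOn ℝ S2 := by
  have h : (range (modelWithCornersEuclideanQuadrant 2 : EuclideanQuadrant 2 → E2)) = S2 :=
    range_euclideanQuadrant 2
  exact h ▸ (modelWithCornersEuclideanQuadrant 2).uniqueDiffOn

def e1 : E2 := EuclideanSpace.single (1 : Fin 2) (1 : ℝ)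

def Lmap : E2 →L[ℝ] ℝ := EuclideanSpace.proj (0 : Fin 2) + EuclideanSpace.proj (1 : Fin 2)

lemma Lmap_apply (v : E2) : Lmap v = v 0 + v 1 := rfl

lemma Lmap_e1 : Lmap e1 = 1 := by
  simp [Lmap_apply, e1, EuclideanSpace.single_apply]

lemma proj0_e1 : (EuclideanSpace.proj (0 : Fin 2) : E2 →L[ℝ] ℝ) e1 = 0 := by
  simp [e1, EuclideanSpace.single_apply]

lemma step {P : Polynomial ℝ} {G : E2 → ℝ} {m : ℕ}
    (hG : ContDiffOn ℝ ((⊤ : ℕ∞) : WithTop ℕ∞) G S2)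
    (h : ∀ v ∈ S2, P.eval (v 0) = G v * (v 0 + v 1) ^ (m + 1)) :
    ∃ G' : E2 → ℝ, ContDiffOn ℝ ((⊤ : ℕ∞) : WithTop ℕ∞) G' S2 ∧
      ∀ v ∈ S2, P.eval (v 0) = G' v * (v 0 + v 1) ^ (m + 2) := by
  refine ⟨fun v => -(fderivWithin ℝ G S2 v e1) / (m + 1), ?_, ?_⟩
  · have hD : ContDiffOn ℝ ((⊤ : ℕ∞) : WithTop ℕ∞) (fderivWithin ℝ G S2) S2 :=
      hG.fderivWithin uniqueDiffOn_S2 le_rfl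
    have := (hD.clm_apply (contDiffOn_const (c := e1)))
    exact (this.neg).div_const _
  · intro v hv
    have hs0 : (0:ℝ) ≤ v 0 := hv 0
    have hs1 : (0:ℝ) ≤ v 1 := hv 1
    by_cases hz : v 0 + v 1 = 0
    · have h00 : P.eval (v 0) = 0 := by
        rw [h v hv, hz]; simp
      rw [h00, hz]; simp
    · have hpos : 0 < v 0 + v 1 := lt_of_le_of_ne (add_nonneg hs0 hs1) (Ne.symm hz)
      set s := v 0 + v 1 with hs
      set D := fderivWithin ℝ G S2 v e1 with hD
      -- derivative of the power of the linear form
      have hq : HasFDerivWithinAt (fun w : E2 => (w 0 + w 1) ^ (m + 1))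
          ((((m + 1 : ℕ) : ℝ) * s ^ m) • (Lmap : E2 →L[ℝ] ℝ)) S2 v := by
        have h1 : HasFDerivAt (fun w : E2 => Lmap w) Lmap v := Lmap.hasFDerivAt
        have h2 := (hasDerivAt_pow (m + 1) (Lmap v)).comp_hasFDerivAt v h1
        simp only [Lmap_apply, Nat.add_sub_cancel] at h2
        exact h2.hasFDerivWithinAt
      have hGd : HasFDerivWithinAt G (fderivWithin ℝ G S2 v) S2 v :=
        (hG.differentiableOn (by simp) v hv).hasFDerivWithinAt
      have hH : HasFDerivWithinAt (fun w : E2 => G w * (w 0 + w 1) ^ (m + 1))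
          (G v • ((((m + 1 : ℕ) : ℝ) * s ^ m) • (Lmap : E2 →L[ℝ] ℝ))
            + ((v 0 + v 1) ^ (m + 1)) • fderivWithin ℝ G S2 v) S2 v := hGd.mul hq
      have hP : HasFDerivWithinAt (fun w : E2 => P.eval (w 0))
          ((Polynomial.derivative P).eval (v 0) •
            (EuclideanSpace.proj (0 : Fin 2) : E2 →L[ℝ] ℝ)) S2 v :=
        (by have h := (P.hasDerivAt (v 0)).comp_hasFDerivAt v
              (EuclideanSpace.proj (0 : Fin 2) : E2 →L[ℝ] ℝ).hasFDerivAt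
            exact h.hasFDerivWithinAt)
      have hH' : HasFDerivWithinAt (fun w : E2 => P.eval (w 0))
          (G v • ((((m + 1 : ℕ) : ℝ) * s ^ m) • (Lmap : E2 →L[ℝ] ℝ))
            + ((v 0 + v 1) ^ (m + 1)) • fderivWithin ℝ G S2 v) S2 v :=
        hH.congr (fun w hw => h w hw) (h v hv)
      have heq := UniqueDiffWithinAt.eq (uniqueDiffOn_S2 v hv) hH' hP
      have key := congrArg (fun T : E2 →L[ℝ] ℝ => T e1) heq
      simp only [ContinuousLinearMap.add_apply, ContinuousLinearMap.coe_smul',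
        Pi.smul_apply, Lmap_e1, proj0_e1, smul_eq_mul, mul_one, mul_zero] at key
      -- key : G v * ((m+1) * s^m) + s^(m+1) * D = 0
      rw [← hs, ← hD] at key
      push_cast at key
      have hkey : s ^ (m + 1) * D = -(((m : ℝ) + 1) * G v * s ^ m) := by
        linear_combination key
      have hm1 : ((m : ℝ) + 1) ≠ 0 := by positivity
      have hfin : (-D / ((m : ℝ) + 1)) * s ^ (m + 2) = G v * s ^ (m + 1) := by
        have h2 : s ^ (m + 2) * D = -(((m : ℝ) + 1) * G v * s ^ (m + 1)) := by
          linear_combination s * hkey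
        field_simp
        linear_combination -h2
      rw [h v hv, ← hs]
      show G v * s ^ (m + 1) = -(fderivWithin ℝ G S2 v e1) / ((m : ℝ) + 1) * s ^ (m + 2)
      exact hfin.symm

lemma poly_zero {P : Polynomial ℝ} {G : E2 → ℝ}
    (hG : ContDiffOn ℝ ((⊤ : ℕ∞) : WithTop ℕ∞) G S2)
    (h : ∀ v ∈ S2, P.eval (v 0) = G v * (v 0 + v 1)) : P = 0 := by
  by_contra hP
  -- iterate the step lemma
  have iter : ∀ m : ℕ, ∃ Gm : E2 → ℝ, ContDiffOn ℝ ((⊤ : ℕ∞) : WithTop ℕ∞) Gm S2 ∧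
      ∀ v ∈ S2, P.eval (v 0) = Gm v * (v 0 + v 1) ^ (m + 1) := by
    intro m
    induction m with
    | zero => exact ⟨G, hG, by simpa using h⟩
    | succ k ih =>
      obtain ⟨Gk, h1, h2⟩ := ih
      exact step h1 h2
  set n := P.natTrailingDegree with hn
  obtain ⟨Gn, hGn, hid⟩ := iter n
  -- factor P = X^n * Q with Q.eval 0 ≠ 0
  have hdvd : (Polynomial.X : Polynomial ℝ) ^ n ∣ P := by
    rw [Polynomial.X_pow_dvd_iff]
    exact fun d hd => Polynomial.coeff_eq_zero_of_lt_natTrailingDegree hd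
  obtain ⟨Q, hQ⟩ := hdvd
  have hQ0 : Q.eval 0 ≠ 0 := by
    rw [← Polynomial.coeff_zero_eq_eval_zero]
    have : P.coeff n = Q.coeff 0 := by
      rw [hQ]
      simpa using Polynomial.coeff_X_pow_mul Q n 0
    rw [← this]
    exact Polynomial.coeff_natTrailingDegree_ne_zero.mpr hP
  -- curve along the x-axis
  set c : ℝ → E2 := fun t => EuclideanSpace.single (0 : Fin 2) t with hc
  have hc_cont : Continuous c :=
    (Isometry.of_dist_eq fun a b => EuclideanSpace.dist_single_same 0 a b).continuous
  have hc_mem : ∀ t : ℝ, 0 ≤ t → c t ∈ S2 := by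
    intro t ht i
    rw [hc]
    simp only [EuclideanSpace.single_apply]
    split <;> simp [ht]
  have hc0 : ∀ t, c t 0 = t := by intro t; simp [hc, EuclideanSpace.single_apply]
  have hc1 : ∀ t, c t 1 = 0 := by intro t; simp [hc, EuclideanSpace.single_apply]
  -- Gn ∘ c tends to a finite limit along 0⁺
  have htends : Filter.Tendsto (fun t => |Gn (c t)|) (nhdsWithin 0 (Set.Ioi 0))
      (nhds |Gn (c 0)|) := by
    have h1 : Filter.Tendsto c (nhdsWithin 0 (Set.Ioi 0)) (nhdsWithin (c 0) S2) :=
      hc_cont.continuousWithinAt.tendsto_nhdsWithin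
        (fun t ht => hc_mem t (le_of_lt ht))
    exact (Filter.Tendsto.comp (hGn.continuousOn (c 0) (hc_mem 0 le_rfl)) h1).abs
  have hev : ∀ t ∈ Set.Ioi (0:ℝ), |Q.eval t| * t⁻¹ = |Gn (c t)| := by
    intro t ht
    have htpos : (0:ℝ) < t := ht
    have hid' := hid (c t) (hc_mem t htpos.le)
    rw [hc0, hc1, add_zero] at hid'
    have hPt : P.eval t = t ^ n * Q.eval t := by rw [hQ]; simp
    have hcancel : Gn (c t) * t = Q.eval t := by
      have htn : (t : ℝ) ^ n ≠ 0 := pow_ne_zero _ (ne_of_gt htpos)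
      apply mul_left_cancel₀ htn
      calc t ^ n * (Gn (c t) * t) = Gn (c t) * t ^ (n + 1) := by ring
        _ = P.eval t := hid'.symm
        _ = t ^ n * Q.eval t := hPt
    have : Gn (c t) = Q.eval t / t := (eq_div_iff (ne_of_gt htpos)).mpr hcancel
    rw [this, abs_div, abs_of_pos htpos, div_eq_mul_inv]
  have h2 : Filter.Tendsto (fun t => |Q.eval t| * t⁻¹) (nhdsWithin 0 (Set.Ioi 0))
      Filter.atTop := by
    refine Filter.Tendsto.pos_mul_atTop (abs_pos.mpr hQ0) ?_ tendsto_inv_nhdsGT_zero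
    exact ((Q.continuous_aeval.tendsto 0).mono_left nhdsWithin_le_nhds).abs
  have h3 : Filter.Tendsto (fun t => |Gn (c t)|) (nhdsWithin 0 (Set.Ioi 0))
      Filter.atTop := by
    refine h2.congr' ?_
    filter_upwards [self_mem_nhdsWithin] with t ht
    exact hev t ht
  exact not_tendsto_atTop_of_tendsto_nhds htends h3

-- Bridge from smooth functions on the quadrant manifold to `ContDiffOn` on `S2`.

lemma smooth_extension (a : QuadrantSmoothFunctions) :
    ContDiffOn ℝ ((⊤ : ℕ∞) : WithTop ℕ∞)
      (fun v => a ((modelWithCornersEuclideanQuadrant 2).symm v)) S2 := by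
  have h := a.contMDiff
  rw [contMDiff_iff] at h
  have h2 := h.2 default default
  simp only [extChartAt, OpenPartialHomeomorph.extend, modelWithCornersSelf_partialEquiv,
    PartialEquiv.trans_refl, OpenPartialHomeomorph.toFun_eq_coe, chartAt_self_eq,
    OpenPartialHomeomorph.refl_partialEquiv, PartialEquiv.refl_trans, OpenPartialHomeomorph.refl_apply,
    PartialEquiv.refl_source, Set.preimage_univ, Set.inter_univ, Function.id_comp] at h2
  exact h2

lemma symm_eq {v : E2} (hv : v ∈ S2) :
    ((modelWithCornersEuclideanQuadrant 2).symm v : EuclideanQuadrant 2) = ⟨v, hv⟩ := by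
  apply Subtype.ext
  ext i
  show max (v i) 0 = v i
  exact max_eq_left (hv i)

lemma eval_sum (s : Finset ℕ) (f : ℕ → QuadrantSmoothFunctions) (q : EuclideanQuadrant 2) :
    (∑ i ∈ s, f i) q = ∑ i ∈ s, f i q := by
  classical
  induction s using Finset.induction_on with
  | empty => simp
  | insert _ _ hnot ih =>
    rw [Finset.sum_insert hnot, Finset.sum_insert hnot, ContMDiffMap.coe_add, Pi.add_apply, ih]

/-- **`C∞([0,∞)²)/(x+y)` is infinite-dimensional although its zero set is a point**
(Example 4.6(iii) of the paper). The zero set of `x + y` in the quadrant is the single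
point `(0,0)`, yet the images of the functions `(x,y) ↦ xᵏ`, `k ∈ ℕ`, are linearly
independent over `ℝ` in the quotient ring, which is therefore infinite-dimensional as a
real vector space. -/
theorem quadrant_quotient_infiniteDimensional :
    (∀ q : EuclideanQuadrant 2,
        (quadrantCoord 0 + quadrantCoord 1) q = 0 ↔ q.val = 0) ∧
    LinearIndependent ℝ
      (fun k : ℕ => Ideal.Quotient.mk quadrantIdeal ((quadrantCoord 0) ^ k)) ∧
    ¬ FiniteDimensional ℝ (QuadrantSmoothFunctions ⧸ quadrantIdeal) := by
  have part1 : ∀ q : EuclideanQuadrant 2,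
      (quadrantCoord 0 + quadrantCoord 1) q = 0 ↔ q.val = 0 := by
    intro q
    have hval : (quadrantCoord 0 + quadrantCoord 1) q = q.val 0 + q.val 1 := rfl
    constructor
    · intro h
      rw [hval] at h
      have h0 := q.2 0
      have h1 := q.2 1
      have e0 : q.val 0 = 0 := by linarith
      have e1 : q.val 1 = 0 := by linarith
      ext i
      fin_cases i
      · exact e0
      · exact e1
    · intro h
      rw [hval, h]
      simp
  have part2 : LinearIndependent ℝ
      (fun k : ℕ => Ideal.Quotient.mk quadrantIdeal ((quadrantCoord 0) ^ k)) := by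
    rw [linearIndependent_iff']
    intro s g hsum i hi
    classical
    -- push the sum inside the quotient map
    have hmk : (Ideal.Quotient.mkₐ ℝ quadrantIdeal)
        (∑ j ∈ s, g j • (quadrantCoord 0) ^ j) = 0 := by
      rw [map_sum]
      simp_rw [map_smul]
      simpa [Ideal.Quotient.mkₐ_eq_mk] using hsum
    have hmem : (∑ j ∈ s, g j • (quadrantCoord 0) ^ j) ∈ quadrantIdeal := by
      rw [← Ideal.Quotient.eq_zero_iff_mem]
      rw [← Ideal.Quotient.mkₐ_eq_mk ℝ]
      exact hmk
    rw [quadrantIdeal, Ideal.mem_span_singleton] at hmem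
    obtain ⟨aq, haq⟩ := hmem
    set P : Polynomial ℝ := ∑ j ∈ s, Polynomial.C (g j) * Polynomial.X ^ j with hPdef
    have hptw : ∀ v ∈ S2, P.eval (v 0) =
        (fun v => aq ((modelWithCornersEuclideanQuadrant 2).symm v)) v * (v 0 + v 1) := by
      intro v hv
      have hqe := congrArg (fun r : QuadrantSmoothFunctions => r ⟨v, hv⟩) haq
      have hLHS : (∑ j ∈ s, g j • (quadrantCoord 0) ^ j) (⟨v, hv⟩ : EuclideanQuadrant 2)
          = ∑ j ∈ s, g j * (v 0) ^ j := by
        rw [eval_sum]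
        refine Finset.sum_congr rfl fun j _ => ?_
        rw [ContMDiffMap.coe_smul, Pi.smul_apply, ContMDiffMap.coe_pow, Pi.pow_apply]
        rfl
      have hRHS : ((quadrantCoord 0 + quadrantCoord 1) * aq) (⟨v, hv⟩ : EuclideanQuadrant 2)
          = (v 0 + v 1) * aq ⟨v, hv⟩ := rfl
      simp only at hqe
      rw [hLHS, hRHS] at hqe
      have hPeval : P.eval (v 0) = ∑ j ∈ s, g j * (v 0) ^ j := by
        rw [hPdef, Polynomial.eval_finset_sum]
        refine Finset.sum_congr rfl fun j _ => ?_
        simp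
      rw [hPeval, hqe]
      show (v 0 + v 1) * aq ⟨v, hv⟩
          = aq ((modelWithCornersEuclideanQuadrant 2).symm v) * (v 0 + v 1)
      rw [symm_eq hv]
      ring
    have hP0 : P = 0 := poly_zero (smooth_extension aq) hptw
    have : P.coeff i = g i := by
      rw [hPdef]
      simp [Polynomial.finset_sum_coeff, Polynomial.coeff_C_mul, Polynomial.coeff_X_pow,
        Finset.sum_ite_eq, hi]
    rw [hP0] at this
    simpa using this.symm
  refine ⟨part1, part2, ?_⟩
  intro hFD
  haveI := hFD
  have : Finite ℕ := part2.finite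
  exact not_finite ℕ
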